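/- Fix real numbers d₁, d₂ and let D_F = diag(d₁, d₂) ∈ M₂(ℂ). Let A ∈ M₂(ℂ) be a hermitian matrix and define α : ℝ² → M₂(ℂ) by α(x⁰, x¹) = x⁰·1 + A. Then α satisfies the causal cone condition — i.e., at every point the 4×4 matrix with blocks [2 ∂_u α, [D_F, α]; −[D_F, α], 2 ∂_v α] is positive semidefinite, where ∂_u = ½(∂₀ + ∂₁), ∂_v = ½(∂₀ − ∂₁) and [D_F, α] = D_F α − α D_F — if and only if ‖[D_F, A]‖ ≤ 1, where ‖·‖ is the operator norm on M₂(ℂ). -/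

import Mathlib

open scoped Matrix.Norms.L2Operator ComplexOrder
open scoped Matrix

lemma aux_psd_iff_norm_le_one {n : Type*} [Fintype n] [DecidableEq n]
    (C : Matrix n n ℂ) :
    (1 - Cᴴ * C).PosSemidef ↔ ‖C‖ ≤ 1 := by
  have key : ∀ x : n → ℂ, star x ⬝ᵥ (1 - Cᴴ * C) *ᵥ x
      = (((‖(WithLp.equiv 2 (n → ℂ)).symm x‖ : ℝ) ^ 2
          - (‖(WithLp.equiv 2 (n → ℂ)).symm (C *ᵥ x)‖ : ℝ) ^ 2 : ℝ) : ℂ) := by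
    intro x
    have h1 : star x ⬝ᵥ x =
        ((‖(WithLp.equiv 2 (n → ℂ)).symm x‖ : ℝ) ^ 2 : ℂ) := by
      rw [dotProduct_comm, ← EuclideanSpace.inner_toLp_toLp, inner_self_eq_norm_sq_to_K]
      norm_cast
    have h2 : star (C *ᵥ x) ⬝ᵥ (C *ᵥ x) =
        ((‖(WithLp.equiv 2 (n → ℂ)).symm (C *ᵥ x)‖ : ℝ) ^ 2 : ℂ) := by
      rw [dotProduct_comm, ← EuclideanSpace.inner_toLp_toLp, inner_self_eq_norm_sq_to_K]
      norm_cast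
    have h3 : star x ⬝ᵥ (Cᴴ * C) *ᵥ x = star (C *ᵥ x) ⬝ᵥ (C *ᵥ x) := by
      rw [← Matrix.mulVec_mulVec, Matrix.dotProduct_mulVec, Matrix.star_mulVec]
    rw [Matrix.sub_mulVec, dotProduct_sub, Matrix.one_mulVec, h1, h3, h2]
    push_cast
    ring
  constructor
  · intro hpsd
    rw [Matrix.l2_opNorm_def]
    refine ContinuousLinearMap.opNorm_le_bound _ zero_le_one fun y => ?_
    set x : n → ℂ := WithLp.equiv 2 (n → ℂ) y with hx
    have hy : y = (WithLp.equiv 2 (n → ℂ)).symm x := rfl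
    have := hpsd.dotProduct_mulVec_nonneg x
    rw [key x] at this
    have h0 : (0:ℝ) ≤ ‖(WithLp.equiv 2 (n → ℂ)).symm x‖ ^ 2
        - ‖(WithLp.equiv 2 (n → ℂ)).symm (C *ᵥ x)‖ ^ 2 := by
      exact_mod_cast this
    have hle : ‖(WithLp.equiv 2 (n → ℂ)).symm (C *ᵥ x)‖
        ≤ ‖(WithLp.equiv 2 (n → ℂ)).symm x‖ := by
      nlinarith [norm_nonneg ((WithLp.equiv 2 (n → ℂ)).symm (C *ᵥ x)),
        norm_nonneg ((WithLp.equiv 2 (n → ℂ)).symm x)]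
    calc ‖(Matrix.toEuclideanLin.trans LinearMap.toContinuousLinearMap C) y‖
        = ‖(WithLp.equiv 2 (n → ℂ)).symm (C *ᵥ x)‖ := by
          rw [hy]; rfl
      _ ≤ ‖(WithLp.equiv 2 (n → ℂ)).symm x‖ := hle
      _ = 1 * ‖y‖ := by rw [one_mul, hy]
  · intro hn
    refine Matrix.posSemidef_iff_dotProduct_mulVec.mpr ⟨(Matrix.isHermitian_one.sub (Matrix.isHermitian_conjTranspose_mul_self C)), fun x => ?_⟩
    rw [key x]
    have hle : ‖(WithLp.equiv 2 (n → ℂ)).symm (C *ᵥ x)‖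
        ≤ ‖(WithLp.equiv 2 (n → ℂ)).symm x‖ := by
      have := C.l2_opNorm_mulVec ((WithLp.equiv 2 (n → ℂ)).symm x)
      calc ‖(WithLp.equiv 2 (n → ℂ)).symm (C *ᵥ x)‖
          ≤ ‖C‖ * ‖(WithLp.equiv 2 (n → ℂ)).symm x‖ := this
        _ ≤ 1 * ‖(WithLp.equiv 2 (n → ℂ)).symm x‖ :=
            mul_le_mul_of_nonneg_right hn (norm_nonneg _)
        _ = _ := one_mul _
    have h0 : (0:ℝ) ≤ ‖(WithLp.equiv 2 (n → ℂ)).symm x‖ ^ 2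
        - ‖(WithLp.equiv 2 (n → ℂ)).symm (C *ᵥ x)‖ ^ 2 := by
      nlinarith [norm_nonneg ((WithLp.equiv 2 (n → ℂ)).symm (C *ᵥ x))]
    exact_mod_cast h0

/-- the affine function `α(x⁰, x¹) = x⁰·1 + A` satisfies the causal-cone
block-positivity condition at every point iff `‖[D_F, A]‖ ≤ 1` in the operator norm. -/
theorem affine_in_causalCone_iff_commutator_norm_le_one (d₁ d₂ : ℝ)
    (A : Matrix (Fin 2) (Fin 2) ℂ) (hA : A.IsHermitian)
    (DF : Matrix (Fin 2) (Fin 2) ℂ) (hDF : DF = Matrix.diagonal ![(d₁ : ℂ), (d₂ : ℂ)])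
    (α : ℝ × ℝ → Matrix (Fin 2) (Fin 2) ℂ)
    (hα : α = fun p => (p.1 : ℂ) • (1 : Matrix (Fin 2) (Fin 2) ℂ) + A) :
    (∀ p : ℝ × ℝ, (Matrix.fromBlocks
        (fderiv ℝ α p (1, 1)) (DF * α p - α p * DF)
        (-(DF * α p - α p * DF)) (fderiv ℝ α p (1, -1))).PosSemidef) ↔
      ‖DF * A - A * DF‖ ≤ 1 := by
  set C : Matrix (Fin 2) (Fin 2) ℂ := DF * A - A * DF with hC
  -- D_F is hermitian
  have hDFh : DFᴴ = DF := by
    rw [hDF]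
    ext i j
    fin_cases i <;> fin_cases j <;>
      simp [Matrix.conjTranspose_apply, Matrix.diagonal_apply]
  -- the commutator is skew-hermitian
  have hCh : Cᴴ = -C := by
    rw [hC]
    simp only [Matrix.conjTranspose_sub, Matrix.conjTranspose_mul, hDFh, hA.eq]
    abel
  -- the derivative of α
  set L : (ℝ × ℝ) →L[ℝ] Matrix (Fin 2) (Fin 2) ℂ :=
    (ContinuousLinearMap.fst ℝ ℝ ℝ).smulRight (1 : Matrix (Fin 2) (Fin 2) ℂ) with hL
  have hαL : α = fun p => L p + A := by
    rw [hα]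
    funext p
    simp [hL, Complex.coe_smul]
  have hderiv : ∀ p : ℝ × ℝ, fderiv ℝ α p = L := by
    intro p
    rw [hαL]
    rw [fderiv_add_const]
    exact L.fderiv
  have hcomm : ∀ p : ℝ × ℝ, DF * α p - α p * DF = C := by
    intro p
    rw [hα, hC]
    simp only [mul_add, add_mul, Matrix.mul_smul, Matrix.smul_mul, mul_one, one_mul]
    abel
  have hblock : ∀ p : ℝ × ℝ, Matrix.fromBlocks
        (fderiv ℝ α p (1, 1)) (DF * α p - α p * DF)
        (-(DF * α p - α p * DF)) (fderiv ℝ α p (1, -1))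
      = Matrix.fromBlocks 1 C Cᴴ 1 := by
    intro p
    rw [hderiv, hcomm, hCh]
    simp [hL]
  haveI : Invertible (1 : Matrix (Fin 2) (Fin 2) ℂ) := invertibleOne
  constructor
  · intro h
    have := h (0, 0)
    rw [hblock] at this
    rw [Matrix.PosDef.fromBlocks₁₁ C 1 Matrix.PosDef.one] at this
    rw [inv_one, mul_one] at this
    exact (aux_psd_iff_norm_le_one C).mp this
  · intro h
    intro p
    rw [hblock]
    rw [Matrix.PosDef.fromBlocks₁₁ C 1 Matrix.PosDef.one, inv_one, mul_one]
    exact (aux_psd_iff_norm_le_one C).mpr h
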